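/- For every δ with 0 < δ < 1/2, the regularized convex energy part f_{1,δ} is a convex function on all of ℝ. -/

import Mathlib

/-- The Flory–Huggins convex energy part `f₁(φ) = φ log φ + (1-φ) log(1-φ)`. -/
noncomputable def f1 (φ : ℝ) : ℝ := φ * Real.log φ + (1 - φ) * Real.log (1 - φ)

/-- The regularized convex energy part `f_{1,δ}`, obtained from `f₁` by quadratic
extension outside `[δ, 1-δ]`, using `f₁'(s) = log(s/(1-s))` and `f₁''(s) = 1/(s(1-s))`. -/
noncomputable def f1d (δ φ : ℝ) : ℝ :=
  if φ ≤ δ then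
    f1 δ + Real.log (δ / (1 - δ)) * (φ - δ) + 1 / (δ * (1 - δ)) * (φ - δ) ^ 2 / 2
  else if φ ≤ 1 - δ then f1 φ
  else
    f1 (1 - δ) + Real.log ((1 - δ) / δ) * (φ - (1 - δ))
      + 1 / (δ * (1 - δ)) * (φ - (1 - δ)) ^ 2 / 2

/-- `f_{1,δ}` is convex on all of `ℝ`. -/
theorem regularized_energy_convex (δ : ℝ) (hδ0 : 0 < δ) (hδ : δ < 1 / 2) :
    ConvexOn ℝ Set.univ (f1d δ) := by
  have h1δ : δ < 1 - δ := by linarith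
  have h1δ0 : 0 < 1 - δ := by linarith
  have hδ1 : δ < 1 := by linarith
  set k : ℝ := 1 / (δ * (1 - δ)) with hkdef
  have hkpos : 0 < k := by positivity
  set g : ℝ → ℝ := fun x =>
    if x ≤ δ then Real.log (δ / (1 - δ)) + (x - δ) * k
    else if x ≤ 1 - δ then Real.log x - Real.log (1 - x)
    else Real.log ((1 - δ) / δ) + (x - (1 - δ)) * k with hg
  -- value of f1d on the middle interval
  have hIcc : ∀ y, δ ≤ y → y ≤ 1 - δ → f1d δ y = f1 y := by
    intro y hy1 hy2
    unfold f1d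
    rcases eq_or_lt_of_le hy1 with h | h
    · rw [if_pos h.ge]
      rw [← h]
      ring
    · rw [if_neg (not_le.2 h), if_pos hy2]
  -- value of f1d on the right
  have hIci : ∀ y, 1 - δ ≤ y → f1d δ y = f1 (1 - δ) + Real.log ((1 - δ) / δ) * (y - (1 - δ))
      + 1 / (δ * (1 - δ)) * (y - (1 - δ)) ^ 2 / 2 := by
    intro y hy
    unfold f1d
    rw [if_neg (by linarith)]
    rcases eq_or_lt_of_le hy with h | h
    · rw [if_pos h.ge, ← h]
      ring
    · rw [if_neg (not_le.2 h)]
  -- derivative of f1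
  have hf1 : ∀ x : ℝ, 0 < x → x < 1 →
      HasDerivAt f1 (Real.log x - Real.log (1 - x)) x := by
    intro x hx0 hx1
    have h1 : HasDerivAt (fun y : ℝ => y * Real.log y) (Real.log x + 1) x :=
      Real.hasDerivAt_mul_log hx0.ne'
    have hin : HasDerivAt (fun y : ℝ => 1 - y) (-1 : ℝ) x := by
      exact (hasDerivAt_id' x).const_sub 1
    have h2 : HasDerivAt (fun y : ℝ => (1 - y) * Real.log (1 - y))
        ((Real.log (1 - x) + 1) * (-1)) x :=
      (Real.hasDerivAt_mul_log (by linarith : (1 : ℝ) - x ≠ 0)).comp x hin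
    have := h1.add h2
    have heq : Real.log x + 1 + (Real.log (1 - x) + 1) * (-1)
        = Real.log x - Real.log (1 - x) := by ring
    rw [heq] at this
    exact this
  -- derivative of the left quadratic
  have hquadL : ∀ x : ℝ, HasDerivAt
      (fun φ : ℝ => f1 δ + Real.log (δ / (1 - δ)) * (φ - δ) + 1 / (δ * (1 - δ)) * (φ - δ) ^ 2 / 2)
      (Real.log (δ / (1 - δ)) + (x - δ) * k) x := by
    intro x
    have hsub : HasDerivAt (fun φ : ℝ => φ - δ) 1 x := (hasDerivAt_id x).sub_const δ
    have h1 : HasDerivAt (fun φ : ℝ => Real.log (δ / (1 - δ)) * (φ - δ))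
        (Real.log (δ / (1 - δ))) x := by
      simpa using hsub.const_mul (Real.log (δ / (1 - δ)))
    have h2 : HasDerivAt (fun φ : ℝ => (φ - δ) ^ 2) (2 * (x - δ)) x := by
      refine (hsub.pow 2).congr_deriv ?_
      norm_num
    have h3 := ((hasDerivAt_const x (f1 δ)).add h1).add ((h2.const_mul k).div_const 2)
    have heq : 0 + Real.log (δ / (1 - δ)) + k * (2 * (x - δ)) / 2
        = Real.log (δ / (1 - δ)) + (x - δ) * k := by ring
    rw [heq] at h3
    exact h3
  -- derivative of the right quadratic
  have hquadR : ∀ x : ℝ, HasDerivAt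
      (fun φ : ℝ => f1 (1 - δ) + Real.log ((1 - δ) / δ) * (φ - (1 - δ))
        + 1 / (δ * (1 - δ)) * (φ - (1 - δ)) ^ 2 / 2)
      (Real.log ((1 - δ) / δ) + (x - (1 - δ)) * k) x := by
    intro x
    have hsub : HasDerivAt (fun φ : ℝ => φ - (1 - δ)) 1 x := (hasDerivAt_id x).sub_const (1 - δ)
    have h1 : HasDerivAt (fun φ : ℝ => Real.log ((1 - δ) / δ) * (φ - (1 - δ)))
        (Real.log ((1 - δ) / δ)) x := by
      simpa using hsub.const_mul (Real.log ((1 - δ) / δ))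
    have h2 : HasDerivAt (fun φ : ℝ => (φ - (1 - δ)) ^ 2) (2 * (x - (1 - δ))) x := by
      refine (hsub.pow 2).congr_deriv ?_
      norm_num
    have h3 := ((hasDerivAt_const x (f1 (1 - δ))).add h1).add ((h2.const_mul k).div_const 2)
    have heq : 0 + Real.log ((1 - δ) / δ) + k * (2 * (x - (1 - δ))) / 2
        = Real.log ((1 - δ) / δ) + (x - (1 - δ)) * k := by ring
    rw [heq] at h3
    exact h3
  have hlogδ : Real.log (δ / (1 - δ)) = Real.log δ - Real.log (1 - δ) :=
    Real.log_div hδ0.ne' h1δ0.ne'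
  have hlogδ' : Real.log ((1 - δ) / δ) = Real.log (1 - δ) - Real.log δ :=
    Real.log_div h1δ0.ne' hδ0.ne'
  -- f1d has derivative g everywhere
  have hder : ∀ x, HasDerivAt (f1d δ) (g x) x := by
    intro x
    rcases lt_trichotomy x δ with hx | hx | hx
    · -- left of δ
      have heq : f1d δ =ᶠ[nhds x] fun φ : ℝ =>
          f1 δ + Real.log (δ / (1 - δ)) * (φ - δ) + 1 / (δ * (1 - δ)) * (φ - δ) ^ 2 / 2 := by
        filter_upwards [Iio_mem_nhds hx] with y hy
        unfold f1d
        rw [if_pos (le_of_lt hy)]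
      have := (hquadL x).congr_of_eventuallyEq heq
      have hgx : g x = Real.log (δ / (1 - δ)) + (x - δ) * k := by
        simp [hg, hx.le]
      rw [hgx]
      exact this
    · -- at δ
      subst hx
      have hleft : HasDerivWithinAt (f1d x) (Real.log (x / (1 - x)) + (x - x) * k)
          (Set.Iic x) x := by
        refine ((hquadL x).hasDerivWithinAt).congr_of_eventuallyEq ?_ ?_
        · filter_upwards [self_mem_nhdsWithin] with y hy
          simp only [Set.mem_Iic] at hy
          unfold f1d
          rw [if_pos hy]
        · unfold f1d; rw [if_pos le_rfl]
      have hright : HasDerivWithinAt (f1d x) (Real.log x - Real.log (1 - x))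
          (Set.Ici x) x := by
        refine ((hf1 x hδ0 hδ1).hasDerivWithinAt).congr_of_eventuallyEq ?_ ?_
        · filter_upwards [self_mem_nhdsWithin,
            mem_nhdsWithin_of_mem_nhds (Iio_mem_nhds h1δ)] with y hy1 hy2
          exact hIcc y hy1 hy2.le
        · exact hIcc x le_rfl h1δ.le
      have hd : Real.log (x / (1 - x)) + (x - x) * k = Real.log x - Real.log (1 - x) := by
        rw [hlogδ]; ring
      rw [hd] at hleft
      have := hleft.union hright
      rw [Set.Iic_union_Ici, hasDerivWithinAt_univ] at this
      have hgx : g x = Real.log x - Real.log (1 - x) := by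
        simp [hg, hlogδ]
      rw [hgx]
      exact this
    · rcases lt_trichotomy x (1 - δ) with hx2 | hx2 | hx2
      · -- middle open interval
        have heq : f1d δ =ᶠ[nhds x] f1 := by
          filter_upwards [Ioo_mem_nhds hx hx2] with y hy
          exact hIcc y hy.1.le hy.2.le
        have := (hf1 x (by linarith) (by linarith)).congr_of_eventuallyEq heq
        have hgx : g x = Real.log x - Real.log (1 - x) := by
          simp [hg, not_le.2 hx, hx2.le]
        rw [hgx]
        exact this
      · -- at 1 - δ
        subst hx2
        have hleft : HasDerivWithinAt (f1d δ) (Real.log (1 - δ) - Real.log δ)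
            (Set.Iic (1 - δ)) (1 - δ) := by
          have h' : HasDerivAt f1 (Real.log (1 - δ) - Real.log (1 - (1 - δ))) (1 - δ) :=
            hf1 (1 - δ) h1δ0 (by linarith)
          have h'' : (1 : ℝ) - (1 - δ) = δ := by ring
          rw [h''] at h'
          refine (h'.hasDerivWithinAt).congr_of_eventuallyEq ?_ ?_
          · filter_upwards [self_mem_nhdsWithin,
              mem_nhdsWithin_of_mem_nhds (Ioi_mem_nhds hx)] with y hy1 hy2
            exact hIcc y hy2.le hy1
          · exact hIcc (1 - δ) h1δ.le le_rfl
        have hright : HasDerivWithinAt (f1d δ)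
            (Real.log ((1 - δ) / δ) + ((1 - δ) - (1 - δ)) * k) (Set.Ici (1 - δ)) (1 - δ) := by
          refine ((hquadR (1 - δ)).hasDerivWithinAt).congr_of_eventuallyEq ?_ ?_
          · filter_upwards [self_mem_nhdsWithin] with y hy
            exact hIci y hy
          · exact hIci (1 - δ) le_rfl
        have hd : Real.log ((1 - δ) / δ) + ((1 - δ) - (1 - δ)) * k
            = Real.log (1 - δ) - Real.log δ := by
          rw [hlogδ']; ring
        rw [hd] at hright
        have := hleft.union hright
        rw [Set.Iic_union_Ici, hasDerivWithinAt_univ] at this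
        have hgx : g (1 - δ) = Real.log (1 - δ) - Real.log δ := by
          have h'' : (1 : ℝ) - (1 - δ) = δ := by ring
          simp [hg, not_le.2 hx, h'']
        rw [hgx]
        exact this
      · -- right of 1 - δ
        have heq : f1d δ =ᶠ[nhds x] fun φ : ℝ =>
            f1 (1 - δ) + Real.log ((1 - δ) / δ) * (φ - (1 - δ))
              + 1 / (δ * (1 - δ)) * (φ - (1 - δ)) ^ 2 / 2 := by
          filter_upwards [Ioi_mem_nhds hx2] with y hy
          exact hIci y hy.le
        have := (hquadR x).congr_of_eventuallyEq heq
        have hgx : g x = Real.log ((1 - δ) / δ) + (x - (1 - δ)) * k := by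
          simp [hg, not_le.2 (lt_trans h1δ hx2), not_le.2 hx2]
        rw [hgx]
        exact this
    -- monotonicity of g
  have hmid : ∀ x y : ℝ, δ ≤ x → x ≤ y → y ≤ 1 - δ →
      Real.log x - Real.log (1 - x) ≤ Real.log y - Real.log (1 - y) := by
    intro x y hx hxy hy
    have h1 : Real.log x ≤ Real.log y := Real.log_le_log (by linarith) hxy
    have h2 : Real.log (1 - y) ≤ Real.log (1 - x) := Real.log_le_log (by linarith) (by linarith)
    linarith
  have hmono : Monotone g := by
    have gL : ∀ x : ℝ, x ≤ δ → g x = Real.log (δ / (1 - δ)) + (x - δ) * k := by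
      intro x hx; simp [hg, hx]
    have gM : ∀ x : ℝ, δ ≤ x → x ≤ 1 - δ → g x = Real.log x - Real.log (1 - x) := by
      intro x hx1 hx2
      rcases eq_or_lt_of_le hx1 with h | h
      · simp [hg, ← h, hlogδ]
      · simp [hg, not_le.2 h, hx2]
    have gR : ∀ x : ℝ, 1 - δ ≤ x → g x = Real.log ((1 - δ) / δ) + (x - (1 - δ)) * k := by
      intro x hx
      rcases eq_or_lt_of_le hx with h | h
      · have h'' : (1 : ℝ) - (1 - δ) = δ := by ring
        simp [hg, ← h, not_le.2 h1δ, h'', hlogδ']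
      · simp [hg, not_le.2 (lt_trans h1δ h), not_le.2 h]
    intro x y hxy
    rcases le_or_gt x δ with hx | hx
    · rcases le_or_gt y δ with hy | hy
      · rw [gL x hx, gL y hy]
        have := mul_le_mul_of_nonneg_right (sub_le_sub_right hxy δ) hkpos.le
        linarith
      · have h1 : g x ≤ g δ := by
          rw [gL x hx, gL δ le_rfl]
          have := mul_le_mul_of_nonneg_right (sub_le_sub_right hx δ) hkpos.le
          linarith
        have h2 : g δ ≤ g y := by
          rcases le_or_gt y (1 - δ) with hy2 | hy2
          · rw [gM δ le_rfl h1δ.le, gM y hy.le hy2]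
            exact hmid δ y le_rfl hy.le hy2
          · have h3 : g δ ≤ g (1 - δ) := by
              rw [gM δ le_rfl h1δ.le, gM (1 - δ) h1δ.le le_rfl]
              exact hmid δ (1 - δ) le_rfl h1δ.le le_rfl
            have h4 : g (1 - δ) ≤ g y := by
              rw [gR (1 - δ) le_rfl, gR y hy2.le]
              have := mul_le_mul_of_nonneg_right (sub_le_sub_right hy2.le (1 - δ)) hkpos.le
              linarith
            linarith
        linarith
    · rcases le_or_gt x (1 - δ) with hx2 | hx2
      · rcases le_or_gt y (1 - δ) with hy2 | hy2
        · rw [gM x hx.le hx2, gM y (by linarith) hy2]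
          exact hmid x y hx.le hxy hy2
        · have h1 : g x ≤ g (1 - δ) := by
            rw [gM x hx.le hx2, gM (1 - δ) h1δ.le le_rfl]
            exact hmid x (1 - δ) hx.le hx2 le_rfl
          have h2 : g (1 - δ) ≤ g y := by
            rw [gR (1 - δ) le_rfl, gR y hy2.le]
            have := mul_le_mul_of_nonneg_right (sub_le_sub_right hy2.le (1 - δ)) hkpos.le
            linarith
          linarith
      · rw [gR x hx2.le, gR y (by linarith)]
        have := mul_le_mul_of_nonneg_right (sub_le_sub_right hxy (1 - δ)) hkpos.le
        linarith
  have hdiff : Differentiable ℝ (f1d δ) := fun x => (hder x).differentiableAt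
  have hderiv : deriv (f1d δ) = g := funext fun x => (hder x).deriv
  refine MonotoneOn.convexOn_of_deriv convex_univ hdiff.continuous.continuousOn
    (hdiff.differentiableOn) ?_
  rw [interior_univ, hderiv]
  exact hmono.monotoneOn _
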